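/- (Corollary 1) Let M be a labeled MDP, M' its augmented MDP, and φ an LTLf formula. If π'* is a policy of M' maximizing Pr(M'^{π'} ⊨ g(φ)) over all policies of M', then the policy π of M obtained from π'* by replacing every choice of action a_term with an arbitrary enabled action of M satisfies Pr(M^π ⊨ φ) = max_{π ∈ Π} Pr(M^π ⊨ φ). Hence policy synthesis maximizing the probability of satisfying the LTLf formula φ on M reduces to LTL maximal policy synthesis for g(φ) on M'. -/

import Mathlib

open scoped ENNReal

namespace LTLfMDP

/-- A labeled Markov decision process (data part): transition probabilities,
enabled actions, initial state and labeling function. -/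
structure MDP (S A AP : Type) where
  P : S → A → S → ℝ≥0∞
  enabled : S → Set A
  init : S
  label : S → Set AP

/-- A finite path from the initial state: the list of action/successor-state
steps taken (the implicit first state is `init`). -/
abbrev FinPath (S A : Type) := List (A × S)

/-- An infinite path from the initial state: at time `i` the action taken and
the successor state reached (the implicit first state is `init`). -/
abbrev InfPath (S A : Type) := ℕ → A × S

/-- A policy maps every finite path to an action. -/
abbrev Policy (S A : Type) := FinPath S A → A

variable {S A AP : Type}

/-- Well-formedness of a labeled MDP: every state has an enabled action and
the transition probabilities of enabled actions sum to one. -/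
def MDP.IsWF [Fintype S] (M : MDP S A AP) : Prop :=
  (∀ s : S, (M.enabled s).Nonempty) ∧
    ∀ (s : S) (a : A), a ∈ M.enabled s → (∑ s' : S, M.P s a s') = 1

/-- The last state of a finite path (`init` for the empty path). -/
def MDP.lastState (M : MDP S A AP) (l : FinPath S A) : S :=
  (l.map Prod.snd).getLastD M.init

/-- The `i`-th state `s_i` along a finite path (`s_0 = init`). -/
def MDP.stateAtF (M : MDP S A AP) (l : FinPath S A) (i : ℕ) : S :=
  M.lastState (l.take i)

/-- A finite path of the MDP: every action is enabled and every transition has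
positive probability. -/
def MDP.ValidFin (M : MDP S A AP) (l : FinPath S A) : Prop :=
  ∀ i (h : i < l.length),
    (l.get ⟨i, h⟩).1 ∈ M.enabled (M.stateAtF l i) ∧
      0 < M.P (M.stateAtF l i) (l.get ⟨i, h⟩).1 (l.get ⟨i, h⟩).2

/-- The `i`-th state `s_i` along an infinite path (`s_0 = init`). -/
def MDP.stateAtI (M : MDP S A AP) (w : InfPath S A) : ℕ → S
  | 0 => M.init
  | i + 1 => (w i).2

/-- An infinite path of the MDP: every action is enabled and every transition
has positive probability. -/
def MDP.ValidInf (M : MDP S A AP) (w : InfPath S A) : Prop :=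
  ∀ i : ℕ,
    (w i).1 ∈ M.enabled (M.stateAtI w i) ∧
      0 < M.P (M.stateAtI w i) (w i).1 (M.stateAtI w (i + 1))

/-- A policy of the MDP chooses an enabled action after every finite path. -/
def MDP.IsPolicy (M : MDP S A AP) (π : Policy S A) : Prop :=
  ∀ l : FinPath S A, π l ∈ M.enabled (M.lastState l)

/-- The finite prefix of length `n` of an infinite path. -/
def takeI (w : InfPath S A) (n : ℕ) : FinPath S A :=
  (List.range n).map w

/-- A finite path is `π`-consistent if each of its actions is the one `π`
assigns to the corresponding proper prefix. -/
def ConsistentFin (π : Policy S A) (l : FinPath S A) : Prop :=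
  ∀ i (h : i < l.length), (l.get ⟨i, h⟩).1 = π (l.take i)

/-- `Paths^π(s_init)`: the set of `π`-consistent infinite paths of the MDP. -/
def MDP.PathsSet (M : MDP S A AP) (π : Policy S A) : Set (InfPath S A) :=
  { w | M.ValidInf w ∧ ∀ i : ℕ, (w i).1 = π (takeI w i) }

/-- The cylinder set of a finite path: all `π`-consistent infinite paths of the
MDP extending it. -/
def MDP.Cyl (M : MDP S A AP) (π : Policy S A) (l : FinPath S A) :
    Set (InfPath S A) :=
  { w | w ∈ M.PathsSet π ∧ takeI w l.length = l }

/-- The σ-algebra generated by the cylinder sets of (valid, `π`-consistent)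
finite paths. -/
def MDP.cylSigma (M : MDP S A AP) (π : Policy S A) :
    MeasurableSpace (InfPath S A) :=
  MeasurableSpace.generateFrom
    { C | ∃ l : FinPath S A, M.ValidFin l ∧ ConsistentFin π l ∧ C = M.Cyl π l }

/-- The product of the transition probabilities along a finite path starting
in a given state. -/
noncomputable def MDP.weightFrom (M : MDP S A AP) : S → List (A × S) → ℝ≥0∞
  | _, [] => 1
  | s, (a, s') :: rest => M.P s a s' * M.weightFrom s' rest

/-- `∏_{0 ≤ i < n} P(s_i, a_i, s_{i+1})` for a finite path from `init`. -/
noncomputable def MDP.pathWeight (M : MDP S A AP) (l : FinPath S A) : ℝ≥0∞ :=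
  M.weightFrom M.init l

/-- `μ` is the probability measure `Pr^π` induced by the policy `π`: it assigns
to the cylinder set of every valid `π`-consistent finite path the product of
the transition probabilities along that path. -/
def IsCylMeasure (M : MDP S A AP) (π : Policy S A)
    (μ : @MeasureTheory.Measure (InfPath S A) (M.cylSigma π)) : Prop :=
  ∀ l : FinPath S A, M.ValidFin l → ConsistentFin π l →
    μ (M.Cyl π l) = M.pathWeight l

/-- `{w ∈ Paths^π(s_init) : pre(w) ∩ Paths_fin,φ ≠ ∅}`: the `π`-consistent
infinite paths having some finite prefix in the given set of finite paths. -/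
def MDP.SatFinSet (M : MDP S A AP) (π : Policy S A)
    (Pfin : Set (FinPath S A)) : Set (InfPath S A) :=
  { w | w ∈ M.PathsSet π ∧ ∃ l ∈ Pfin, takeI w l.length = l }

/-- The augmented MDP `M'`: state `none` is `s_term`, action `none` is
`a_term`, and atomic proposition `none` is `alive`. -/
noncomputable def MDP.augment (M : MDP S A AP) : MDP (Option S) (Option A) (Option AP) where
  P s a s' :=
    match s, a, s' with
    | some s0, some a0, some s1 => M.P s0 a0 s1
    | _, none, none => 1
    | _, _, _ => 0
  enabled s :=
    match s with
    | some s0 => insert none (Option.some '' M.enabled s0)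
    | none => {none}
  init := some M.init
  label s :=
    match s with
    | some s0 => insert none (Option.some '' M.label s0)
    | none => ∅

/-- A finite path of `M` viewed as a finite path of the augmented MDP `M'`. -/
def liftFin (l : FinPath S A) : FinPath (Option S) (Option A) :=
  l.map fun p => (some p.1, some p.2)

/-- Membership in `Π'`: under `π'` every `π'`-consistent path of the augmented
MDP eventually takes the action `a_term` (= `none`). -/
def MDP.Terminating (M' : MDP (Option S) (Option A) (Option AP))
    (π' : Policy (Option S) (Option A)) : Prop :=
  ∀ w ∈ M'.PathsSet π', ∃ i : ℕ, (w i).1 = (none : Option A)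

/-- Syntax of LTL / LTLf formulas over atomic propositions `α`. -/
inductive LTL (α : Type) : Type
  | tru : LTL α
  | atom : α → LTL α
  | neg : LTL α → LTL α
  | conj : LTL α → LTL α → LTL α
  | next : LTL α → LTL α
  | untl : LTL α → LTL α → LTL α

variable {α : Type}

/-- Infinite-trace (LTL) satisfaction `σ, i ⊨ φ`. -/
def LTL.SatI (σ : ℕ → Set α) : ℕ → LTL α → Prop
  | _, .tru => True
  | i, .atom p => p ∈ σ i
  | i, .neg φ => ¬ LTL.SatI σ i φ
  | i, .conj φ ψ => LTL.SatI σ i φ ∧ LTL.SatI σ i ψ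
  | i, .next φ => LTL.SatI σ (i + 1) φ
  | i, .untl φ ψ =>
      ∃ j : ℕ, i ≤ j ∧ LTL.SatI σ j ψ ∧ ∀ k : ℕ, i ≤ k → k < j → LTL.SatI σ k φ

/-- Infinite-trace (LTL) satisfaction `σ ⊨ φ`. -/
def LTL.Sat (σ : ℕ → Set α) (φ : LTL α) : Prop := LTL.SatI σ 0 φ

/-- `G φ` abbreviates `¬(⊤ U ¬φ)`. -/
def LTL.G (φ : LTL α) : LTL α := .neg (.untl .tru (.neg φ))

/-- Finite-trace (LTLf) satisfaction `ρ, i ⊨ φ` (positions outside the trace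
carry the empty letter, which is never consulted from a position inside a
nonempty trace). -/
def LTL.SatFI (ρ : List (Set α)) : ℕ → LTL α → Prop
  | _, .tru => True
  | i, .atom p => p ∈ ρ.getD i ∅
  | i, .neg φ => ¬ LTL.SatFI ρ i φ
  | i, .conj φ ψ => LTL.SatFI ρ i φ ∧ LTL.SatFI ρ i ψ
  | i, .next φ => i + 1 < ρ.length ∧ LTL.SatFI ρ (i + 1) φ
  | i, .untl φ ψ =>
      ∃ j : ℕ, i ≤ j ∧ j < ρ.length ∧ LTL.SatFI ρ j ψ ∧
        ∀ k : ℕ, i ≤ k → k < j → LTL.SatFI ρ k φ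

/-- Finite-trace (LTLf) satisfaction `ρ ⊨ φ`. -/
def LTL.SatF (ρ : List (Set α)) (φ : LTL α) : Prop := LTL.SatFI ρ 0 φ

/-- The translation `t` from LTLf formulas over `α` to LTL formulas over
`Option α`, where the fresh proposition `alive` is `none`. -/
def LTL.trans : LTL α → LTL (Option α)
  | .tru => .tru
  | .atom p => .conj (.atom (some p)) (.atom none)
  | .neg φ => .neg φ.trans
  | .conj φ ψ => .conj φ.trans ψ.trans
  | .next φ => .next (.conj (.atom none) φ.trans)
  | .untl φ ψ => .untl φ.trans (.conj (.atom none) ψ.trans)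

/-- `g(φ) = t(φ) ∧ (alive U (G ¬alive))`. -/
def LTL.gtrans (φ : LTL α) : LTL (Option α) :=
  .conj φ.trans (.untl (.atom none) (LTL.G (.neg (.atom none))))

/-- The lift of a finite trace over `2^AP` to an infinite trace over
`2^(AP ∪ {alive})`: the `i`-th letter is `ρ_i ∪ {alive}` for `i < |ρ|`
and `∅` afterwards. -/
def liftTrace (ρ : List (Set α)) : ℕ → Set (Option α) := fun i =>
  if i < ρ.length then insert none (Option.some '' ρ.getD i ∅) else ∅

/-- `{w ∈ Paths^π(s_init) : w ⊨ φ}` for an LTLf formula `φ`: some finite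
prefix of `w` has labeling `L(s_0)…L(s_k)` in `L(φ)`. -/
def MDP.SatPhiSet (M : MDP S A AP) (π : Policy S A) (φ : LTL AP) :
    Set (InfPath S A) :=
  { w | w ∈ M.PathsSet π ∧ ∃ k : ℕ,
      LTL.SatF ((List.range (k + 1)).map fun i => M.label (M.stateAtI w i)) φ }

/-- `{w ∈ Paths^π(s_init) : L(w) ⊨ ψ}` for an LTL formula `ψ`: the labeling of
the infinite path `w` satisfies `ψ` under infinite-trace semantics. -/
def MDP.SatLTLSet {S A AP' : Type} (M : MDP S A AP') (π : Policy S A)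
    (ψ : LTL AP') : Set (InfPath S A) :=
  { w | w ∈ M.PathsSet π ∧ LTL.Sat (fun i => M.label (M.stateAtI w i)) ψ }

/-! ### Auxiliary development -/

section Aux

open scoped Classical

variable {S A AP : Type}

theorem length_takeI (w : InfPath S A) (n : ℕ) : (takeI w n).length = n := by
  simp [takeI]

theorem getElem_takeI (w : InfPath S A) (n i : ℕ) (h : i < (takeI w n).length) :
    (takeI w n)[i] = w i := by
  simp [takeI] at h ⊢

theorem take_takeI (w : InfPath S A) {m n : ℕ} (h : m ≤ n) :
    (takeI w n).take m = takeI w m := by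
  simp [takeI, ← List.map_take, List.take_range, Nat.min_eq_left h]

theorem MDP.lastState_concat (M : MDP S A AP) (l : FinPath S A) (p : A × S) :
    M.lastState (l ++ [p]) = p.2 := by
  simp [MDP.lastState, List.getLastD_concat]

theorem MDP.stateAtF_zero (M : MDP S A AP) (l : FinPath S A) :
    M.stateAtF l 0 = M.init := rfl

theorem MDP.stateAtF_succ (M : MDP S A AP) (l : FinPath S A) {i : ℕ}
    (h : i < l.length) : M.stateAtF l (i + 1) = l[i].2 := by
  have ht : l.take (i + 1) = l.take i ++ [l[i]] := by
    rw [List.take_succ]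
    simp [List.getElem?_eq_getElem h]
  rw [MDP.stateAtF, ht, MDP.lastState_concat]

theorem MDP.stateAtF_take (M : MDP S A AP) (l : FinPath S A) {i n : ℕ}
    (h : i ≤ n) : M.stateAtF (l.take n) i = M.stateAtF l i := by
  simp [MDP.stateAtF, List.take_take, Nat.min_eq_left h]

theorem MDP.lastState_eq_stateAtF (M : MDP S A AP) (l : FinPath S A) :
    M.lastState l = M.stateAtF l l.length := by
  simp [MDP.stateAtF, MDP.lastState]

theorem MDP.stateAtI_eq_stateAtF (M : MDP S A AP) (w : InfPath S A) {i n : ℕ}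
    (h : i ≤ n) : M.stateAtI w i = M.stateAtF (takeI w n) i := by
  cases i with
  | zero => rfl
  | succ i =>
      have hi : i < (takeI w n).length := by rw [length_takeI]; omega
      rw [M.stateAtF_succ (takeI w n) hi, getElem_takeI]
      rfl

theorem MDP.lastState_takeI (M : MDP S A AP) (w : InfPath S A) (n : ℕ) :
    M.lastState (takeI w n) = M.stateAtI w n := by
  rw [M.lastState_eq_stateAtF, length_takeI, M.stateAtI_eq_stateAtF w le_rfl]

theorem MDP.validFin_takeI (M : MDP S A AP) {w : InfPath S A}
    (hw : M.ValidInf w) (n : ℕ) : M.ValidFin (takeI w n) := by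
  intro i h
  have hi : i < n := by rwa [length_takeI] at h
  have hg : (takeI w n).get ⟨i, h⟩ = w i := getElem_takeI w n i h
  have h1 : M.stateAtF (takeI w n) i = M.stateAtI w i :=
    (M.stateAtI_eq_stateAtF w hi.le).symm
  have h2 := hw i
  rw [hg, h1]
  exact ⟨h2.1, h2.2⟩

/-- The finite trace `L(s_0) … L(s_n)` of a finite path. -/
def MDP.traceF (M : MDP S A AP) (l : FinPath S A) : List (Set AP) :=
  (List.range (l.length + 1)).map fun i => M.label (M.stateAtF l i)

theorem MDP.length_traceF (M : MDP S A AP) (l : FinPath S A) :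
    (M.traceF l).length = l.length + 1 := by simp [MDP.traceF]

theorem MDP.getD_traceF (M : MDP S A AP) (l : FinPath S A) {i : ℕ}
    (h : i ≤ l.length) : (M.traceF l).getD i ∅ = M.label (M.stateAtF l i) := by
  have hi : i < l.length + 1 := by omega
  simp [MDP.traceF, List.getD, List.getElem?_eq_getElem, hi]

theorem MDP.traceF_takeI (M : MDP S A AP) (w : InfPath S A) (k : ℕ) :
    M.traceF (takeI w k) =
      (List.range (k + 1)).map fun i => M.label (M.stateAtI w i) := by
  unfold MDP.traceF
  rw [length_takeI]
  refine List.map_congr_left fun i hi => ?_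
  rw [List.mem_range] at hi
  rw [← M.stateAtI_eq_stateAtF w (by omega : i ≤ k)]

section Trans

variable {α : Type}

theorem none_mem_liftTrace (ρ : List (Set α)) (i : ℕ) :
    none ∈ liftTrace ρ i ↔ i < ρ.length := by
  by_cases h : i < ρ.length <;> simp [liftTrace, h]

theorem some_mem_liftTrace (ρ : List (Set α)) (i : ℕ) (p : α) :
    some p ∈ liftTrace ρ i ↔ i < ρ.length ∧ p ∈ ρ.getD i ∅ := by
  by_cases h : i < ρ.length <;> simp [liftTrace, h]

theorem liftTrace_sat_iff (φ : LTL α) (ρ : List (Set α)) :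
    ∀ {i : ℕ}, i < ρ.length →
      (LTL.SatI (liftTrace ρ) i (LTL.trans φ) ↔ LTL.SatFI ρ i φ) := by
  induction φ with
  | tru => intro i _; simp [LTL.trans, LTL.SatI, LTL.SatFI]
  | atom p =>
      intro i h
      simp [LTL.trans, LTL.SatI, LTL.SatFI, some_mem_liftTrace, none_mem_liftTrace, h]
  | neg φ ih =>
      intro i h
      simp only [LTL.trans, LTL.SatI, LTL.SatFI, ih h]
  | conj φ ψ ihφ ihψ =>
      intro i h
      simp only [LTL.trans, LTL.SatI, LTL.SatFI, ihφ h, ihψ h]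
  | next φ ih =>
      intro i h
      simp only [LTL.trans, LTL.SatI, LTL.SatFI, none_mem_liftTrace]
      constructor
      · rintro ⟨h1, h2⟩; exact ⟨h1, (ih h1).1 h2⟩
      · rintro ⟨h1, h2⟩; exact ⟨h1, (ih h1).2 h2⟩
  | untl φ ψ ihφ ihψ =>
      intro i h
      simp only [LTL.trans, LTL.SatI, LTL.SatFI, none_mem_liftTrace]
      constructor
      · rintro ⟨j, hij, ⟨hj, hψ⟩, hks⟩
        exact ⟨j, hij, hj, (ihψ hj).1 hψ, fun k hik hkj =>
          (ihφ (by omega)).1 (hks k hik hkj)⟩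
      · rintro ⟨j, hij, hj, hψ, hks⟩
        exact ⟨j, hij, ⟨hj, (ihψ hj).2 hψ⟩, fun k hik hkj =>
          (ihφ (by omega)).2 (hks k hik hkj)⟩

theorem sat_gtrans_liftTrace (φ : LTL α) (ρ : List (Set α))
    (h0 : 0 < ρ.length) :
    LTL.Sat (liftTrace ρ) (LTL.gtrans φ) ↔ LTL.SatF ρ φ := by
  unfold LTL.Sat LTL.SatF LTL.gtrans
  rw [show LTL.SatI (liftTrace ρ) 0 ((φ.trans).conj _) =
      (LTL.SatI (liftTrace ρ) 0 φ.trans ∧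
        LTL.SatI (liftTrace ρ) 0 (LTL.untl (.atom none)
          (LTL.G (.neg (.atom none))))) from rfl]
  rw [liftTrace_sat_iff φ ρ h0]
  refine and_iff_left ?_
  refine ⟨ρ.length, Nat.zero_le _, ?_, fun k _ hk => (none_mem_liftTrace ρ k).2 hk⟩
  simp only [LTL.G, LTL.SatI, none_mem_liftTrace]
  rintro ⟨j, hj, hmem, -⟩
  exact absurd hmem (by simp; omega)

end Trans

section Measure

variable {S A AP : Type}

theorem measure_biUnion_cyl (M : MDP S A AP) (π : Policy S A)
    (μ : @MeasureTheory.Measure (InfPath S A) (M.cylSigma π))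
    (hμ : IsCylMeasure M π μ) {γ : Type} [Countable γ] (D : Set γ)
    (f : γ → FinPath S A)
    (hv : ∀ x ∈ D, M.ValidFin (f x)) (hc : ∀ x ∈ D, ConsistentFin π (f x))
    (hd : D.PairwiseDisjoint fun x => M.Cyl π (f x)) :
    μ (⋃ x ∈ D, M.Cyl π (f x)) = ∑' x : D, M.pathWeight (f x) := by
  letI : MeasurableSpace (InfPath S A) := M.cylSigma π
  have hmeas : ∀ x ∈ D, MeasurableSet (M.Cyl π (f x)) := fun x hx =>
    MeasurableSpace.measurableSet_generateFrom ⟨f x, hv x hx, hc x hx, rfl⟩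
  rw [MeasureTheory.measure_biUnion D.to_countable hd hmeas]
  exact tsum_congr fun x => hμ (f x) (hv x x.2) (hc x x.2)

/-- The minimal finite paths whose trace satisfies `φ`. -/
def Dphi (M : MDP S A AP) (π : Policy S A) (φ : LTL AP) : Set (FinPath S A) :=
  {l | M.ValidFin l ∧ ConsistentFin π l ∧ LTL.SatF (M.traceF l) φ ∧
      ∀ m < l.length, ¬ LTL.SatF (M.traceF (l.take m)) φ}

theorem mem_cyl_take_eq (M : MDP S A AP) (π : Policy S A)
    {w : InfPath S A} {l₁ l₂ : FinPath S A} (h₁ : w ∈ M.Cyl π l₁)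
    (h₂ : w ∈ M.Cyl π l₂) (h : l₁.length ≤ l₂.length) :
    l₁ = l₂.take l₁.length := by
  conv_rhs => rw [← h₂.2]
  rw [take_takeI w h, h₁.2]

theorem cyl_subset_satPhiSet (M : MDP S A AP) (π : Policy S A) (φ : LTL AP)
    {l : FinPath S A} (hsat : LTL.SatF (M.traceF l) φ) :
    M.Cyl π l ⊆ M.SatPhiSet π φ := by
  rintro w ⟨hw, htake⟩
  refine ⟨hw, l.length, ?_⟩
  rw [← M.traceF_takeI w l.length, htake]
  exact hsat

theorem satPhiSet_eq (M : MDP S A AP) (π : Policy S A) (φ : LTL AP) :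
    M.SatPhiSet π φ = ⋃ l ∈ Dphi M π φ, M.Cyl π l := by
  ext w
  constructor
  · rintro ⟨hw, k, hk⟩
    rw [← M.traceF_takeI w k] at hk
    have hex : ∃ n, LTL.SatF (M.traceF (takeI w n)) φ := ⟨k, hk⟩
    classical
    set k₀ := Nat.find hex with hk₀
    refine Set.mem_biUnion (?_ : takeI w k₀ ∈ Dphi M π φ) ?_
    · refine ⟨M.validFin_takeI hw.1 k₀, ?_, Nat.find_spec hex, ?_⟩
      · intro i h
        have hi : i < k₀ := by rwa [length_takeI] at h
        have hg : (takeI w k₀).get ⟨i, h⟩ = w i := getElem_takeI w k₀ i h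
        rw [hg, hw.2 i, take_takeI w hi.le]
      · intro m hm
        rw [length_takeI] at hm
        rw [take_takeI w hm.le]
        exact Nat.find_min hex hm
    · exact ⟨hw, by rw [length_takeI]⟩
  · intro hw
    simp only [Set.mem_iUnion] at hw
    obtain ⟨l, hl, hcyl⟩ := hw
    exact cyl_subset_satPhiSet M π φ hl.2.2.1 hcyl

theorem dphi_pairwiseDisjoint (M : MDP S A AP) (π : Policy S A) (φ : LTL AP) :
    (Dphi M π φ).PairwiseDisjoint fun l => M.Cyl π l := by
  intro l₁ h₁ l₂ h₂ hne
  rw [Function.onFun, Set.disjoint_left]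
  intro w hw₁ hw₂
  rcases le_or_gt l₁.length l₂.length with h | h
  · have ht := mem_cyl_take_eq M π hw₁ hw₂ h
    rcases eq_or_lt_of_le h with he | hlt
    · exact hne (by rw [ht, he, List.take_length])
    · exact h₂.2.2.2 l₁.length hlt (by rw [← ht]; exact h₁.2.2.1)
  · have ht := mem_cyl_take_eq M π hw₂ hw₁ h.le
    exact h₁.2.2.2 l₂.length h (by rw [← ht]; exact h₂.2.2.1)

end Measure

section Augment

variable {S A AP : Type}

theorem length_liftFin (l : FinPath S A) : (liftFin l).length = l.length := by
  simp [liftFin]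

theorem getElem_liftFin (l : FinPath S A) (i : ℕ) (h : i < l.length) :
    (liftFin l)[i]'(by rw [length_liftFin]; exact h) = (some l[i].1, some l[i].2) := by
  simp [liftFin]

theorem take_liftFin (l : FinPath S A) (i : ℕ) :
    (liftFin l).take i = liftFin (l.take i) := by
  simp [liftFin, List.map_take]

theorem liftFin_injective : Function.Injective (liftFin (S := S) (A := A)) := by
  apply List.map_injective_iff.mpr
  rintro ⟨a, s⟩ ⟨b, t⟩ h
  simpa [Prod.ext_iff] using h

theorem getLastD_map_some {β : Type} (xs : List β) (d : β) :
    (xs.map some).getLastD (some d) = some (xs.getLastD d) := by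
  induction xs generalizing d with
  | nil => rfl
  | cons a xs ih => simp only [List.map_cons, List.getLastD_cons, ih]

theorem lastState_liftFin (M : MDP S A AP) (l : FinPath S A) :
    (M.augment).lastState (liftFin l) = some (M.lastState l) := by
  have h : (liftFin l).map Prod.snd = (l.map Prod.snd).map some := by
    simp [liftFin, List.map_map]
  show ((liftFin l).map Prod.snd).getLastD (some M.init) = _
  rw [h, getLastD_map_some]
  rfl

theorem stateAtF_liftFin (M : MDP S A AP) (l : FinPath S A) (i : ℕ) :
    (M.augment).stateAtF (liftFin l) i = some (M.stateAtF l i) := by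
  unfold MDP.stateAtF
  rw [take_liftFin, lastState_liftFin]

/-- The lift of a finite path of `M` followed by the termination step. -/
def deadPath (l : FinPath S A) : FinPath (Option S) (Option A) :=
  liftFin l ++ [(none, none)]

theorem length_deadPath (l : FinPath S A) :
    (deadPath l).length = l.length + 1 := by
  simp [deadPath, length_liftFin]

theorem take_deadPath (l : FinPath S A) {i : ℕ} (h : i ≤ l.length) :
    (deadPath l).take i = liftFin (l.take i) := by
  rw [deadPath, List.take_append_of_le_length (by rw [length_liftFin]; exact h),
    take_liftFin]

theorem stateAtF_deadPath (M : MDP S A AP) (l : FinPath S A) {i : ℕ}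
    (h : i ≤ l.length) :
    (M.augment).stateAtF (deadPath l) i = some (M.stateAtF l i) := by
  unfold MDP.stateAtF
  rw [take_deadPath l h, lastState_liftFin]

theorem getElem_deadPath_lt (l : FinPath S A) {i : ℕ} (h : i < l.length) :
    (deadPath l)[i]'(by rw [length_deadPath]; omega) =
      (some l[i].1, some l[i].2) := by
  unfold deadPath
  rw [List.getElem_append_left (by rw [length_liftFin]; exact h)]
  exact getElem_liftFin l i h

theorem getElem_deadPath_last (l : FinPath S A) :
    (deadPath l)[l.length]'(by rw [length_deadPath]; omega) = (none, none) := by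
  unfold deadPath
  rw [List.getElem_append_right (by rw [length_liftFin] : (liftFin l).length ≤ l.length)]
  simp [length_liftFin]

theorem getElem_deadPath_of_eq (l : FinPath S A) {i : ℕ} (h : i = l.length) :
    (deadPath l)[i]'(by rw [length_deadPath]; omega) = (none, none) := by
  subst h; exact getElem_deadPath_last l

theorem none_mem_enabled_augment (M : MDP S A AP) (s : Option S) :
    none ∈ (M.augment).enabled s := by
  cases s <;> simp [MDP.augment]

theorem validFin_deadPath (M : MDP S A AP) {l : FinPath S A}
    (hl : M.ValidFin l) : (M.augment).ValidFin (deadPath l) := by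
  intro i h
  have hlen : i < l.length + 1 := by rwa [length_deadPath] at h
  rcases Nat.lt_or_ge i l.length with hi | hi
  · have hg : (deadPath l).get ⟨i, h⟩ = (some l[i].1, some l[i].2) :=
      getElem_deadPath_lt l hi
    have hs := stateAtF_deadPath M l hi.le
    rw [hg, hs]
    have hv := hl i hi
    constructor
    · show some l[i].1 ∈ insert none (Option.some '' M.enabled (M.stateAtF l i))
      exact Set.mem_insert_iff.mpr (Or.inr ⟨_, hv.1, rfl⟩)
    · exact hv.2
  · have hi' : i = l.length := by omega
    subst hi'
    have hg : (deadPath l).get ⟨l.length, h⟩ = (none, none) := getElem_deadPath_last l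
    have hs := stateAtF_deadPath M l le_rfl
    rw [hg, hs]
    exact ⟨none_mem_enabled_augment M _, by norm_num [MDP.augment]⟩

/-- The finite paths of `M` whose lift is `π''`-consistent, on which `π''`
next plays `a_term`, and whose trace satisfies `φ`. -/
def Daug (M : MDP S A AP) (π'' : Policy (Option S) (Option A)) (φ : LTL AP) :
    Set (FinPath S A) :=
  {l | M.ValidFin l ∧
    (∀ i (h : i < l.length), some (l.get ⟨i, h⟩).1 = π'' (liftFin (l.take i))) ∧
    π'' (liftFin l) = none ∧ LTL.SatF (M.traceF l) φ}

theorem consistentFin_deadPath (M : MDP S A AP)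
    {π'' : Policy (Option S) (Option A)} {φ : LTL AP} {l : FinPath S A}
    (hl : l ∈ Daug M π'' φ) : ConsistentFin π'' (deadPath l) := by
  intro i h
  have hlen : i < l.length + 1 := by rwa [length_deadPath] at h
  rcases Nat.lt_or_ge i l.length with hi | hi
  · have hg : (deadPath l).get ⟨i, h⟩ = (some l[i].1, some l[i].2) :=
      getElem_deadPath_lt l hi
    rw [hg, take_deadPath l hi.le]
    exact hl.2.1 i hi
  · have hi' : i = l.length := by omega
    subst hi'
    have hg : (deadPath l).get ⟨l.length, h⟩ = (none, none) := getElem_deadPath_last l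
    rw [hg, take_deadPath l le_rfl, List.take_length]
    exact hl.2.2.1.symm

theorem weightFrom_lift_dead (M : MDP S A AP) :
    ∀ (l : FinPath S A) (s : S),
      (M.augment).weightFrom (some s) (liftFin l ++ [(none, none)]) =
        M.weightFrom s l := by
  intro l
  induction l with
  | nil =>
      intro s
      show (M.augment).P (some s) none none * (M.augment).weightFrom none [] = 1
      simp [MDP.augment, MDP.weightFrom]
  | cons p rest ih =>
      intro s
      obtain ⟨a, s'⟩ := p
      show (M.augment).P (some s) (some a) (some s') *
          (M.augment).weightFrom (some s') (liftFin rest ++ [(none, none)]) = _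
      rw [ih s']
      rfl

theorem pathWeight_deadPath (M : MDP S A AP) (l : FinPath S A) :
    (M.augment).pathWeight (deadPath l) = M.pathWeight l :=
  weightFrom_lift_dead M l M.init

theorem stateAtI_none_tail (M : MDP S A AP)
    {π'' : Policy (Option S) (Option A)} (hπ'' : (M.augment).IsPolicy π'')
    {w : InfPath (Option S) (Option A)} (hw : w ∈ (M.augment).PathsSet π'')
    {n : ℕ} (hn : (M.augment).stateAtI w n = none) :
    ∀ m, n ≤ m → (M.augment).stateAtI w m = none := by
  intro m hm
  induction m with
  | zero => exact Nat.le_zero.mp hm ▸ hn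
  | succ m ih =>
      rcases Nat.lt_or_ge n (m + 1) with h | h
      · have hsm : (M.augment).stateAtI w m = none := ih (by omega)
        have hpol := hπ'' (takeI w m)
        rw [(M.augment).lastState_takeI w m, hsm] at hpol
        have hact : (w m).1 = none := by
          rw [hw.2 m]
          simpa [MDP.augment] using hpol
        have hv := (hw.1 m).2
        rw [hsm, hact] at hv
        show (w m).2 = none
        cases hws : (w m).2 with
        | none => rfl
        | some s =>
            exfalso
            have : (M.augment).stateAtI w (m + 1) = some s := hws
            rw [this] at hv
            simp [MDP.augment] at hv
      · have : n = m + 1 := by omega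
        exact this ▸ hn

theorem takeI_eq {S A : Type} (w : InfPath S A) {L : FinPath S A} {m : ℕ}
    (hlen : L.length = m) (h : ∀ i (hi : i < m), w i = L[i]'(by omega)) :
    takeI w m = L := by
  apply List.ext_getElem (by rw [length_takeI, hlen])
  intro i h1 h2
  rw [getElem_takeI]
  exact h i (by rwa [length_takeI] at h1)

theorem exists_liftFin (m : FinPath (Option S) (Option A))
    (h : ∀ p ∈ m, ∃ a s, p = (some a, some s)) : ∃ l, liftFin l = m := by
  induction m with
  | nil => exact ⟨[], rfl⟩
  | cons p rest ih =>
      obtain ⟨a, s, rfl⟩ := h p List.mem_cons_self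
      obtain ⟨l, hl⟩ := ih fun q hq => h q (List.mem_cons_of_mem _ hq)
      exact ⟨(a, s) :: l, by simp [liftFin] at hl ⊢; exact hl⟩

end Augment

section Decomp

variable {S A AP : Type}

theorem sigma_eq_liftTrace (M : MDP S A AP) {w : InfPath (Option S) (Option A)}
    {l : FinPath S A}
    (h1 : ∀ i ≤ l.length, (M.augment).stateAtI w i = some (M.stateAtF l i))
    (h2 : ∀ m, l.length < m → (M.augment).stateAtI w m = none) :
    (fun i => (M.augment).label ((M.augment).stateAtI w i)) =
      liftTrace (M.traceF l) := by
  funext i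
  by_cases hi : i ≤ l.length
  · rw [h1 i hi]
    have hl : liftTrace (M.traceF l) i =
        insert none (Option.some '' (M.traceF l).getD i ∅) := by
      simp only [liftTrace, if_pos (show i < (M.traceF l).length by
        rw [M.length_traceF]; omega)]
    rw [hl, M.getD_traceF l hi]
    rfl
  · rw [h2 i (by omega)]
    simp only [liftTrace, if_neg (show ¬ i < (M.traceF l).length by
      rw [M.length_traceF]; omega)]
    rfl

theorem cyl_dead_subset (M : MDP S A AP)
    {π'' : Policy (Option S) (Option A)} (hπ'' : (M.augment).IsPolicy π'')
    (φ : LTL AP) {l : FinPath S A} (hl : l ∈ Daug M π'' φ) :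
    (M.augment).Cyl π'' (deadPath l) ⊆
      (M.augment).SatLTLSet π'' (LTL.gtrans φ) := by
  rintro w ⟨hw, htake⟩
  rw [length_deadPath] at htake
  have hstate_le : ∀ i ≤ l.length,
      (M.augment).stateAtI w i = some (M.stateAtF l i) := by
    intro i hi
    rw [(M.augment).stateAtI_eq_stateAtF w (show i ≤ l.length + 1 by omega),
      htake, stateAtF_deadPath M l hi]
  have hnext : (M.augment).stateAtI w (l.length + 1) = none := by
    rw [(M.augment).stateAtI_eq_stateAtF w le_rfl, htake,
      (M.augment).stateAtF_succ (deadPath l) (by rw [length_deadPath]; omega)]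
    rw [getElem_deadPath_last]
  have htail := stateAtI_none_tail M hπ'' hw hnext
  refine ⟨hw, ?_⟩
  have hσ := sigma_eq_liftTrace M hstate_le (fun m hm => htail m (by omega))
  show LTL.Sat (fun i => (M.augment).label ((M.augment).stateAtI w i))
    (LTL.gtrans φ)
  rw [hσ]
  exact (sat_gtrans_liftTrace φ _ (by rw [M.length_traceF]; omega)).2 hl.2.2.2

theorem satLTLSet_augment_eq (M : MDP S A AP)
    {π'' : Policy (Option S) (Option A)} (hπ'' : (M.augment).IsPolicy π'')
    (φ : LTL AP) :
    (M.augment).SatLTLSet π'' (LTL.gtrans φ) =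
      ⋃ l ∈ Daug M π'' φ, (M.augment).Cyl π'' (deadPath l) := by
  ext w
  constructor
  · rintro ⟨hw, hsat⟩
    set σ : ℕ → Set (Option AP) :=
      fun i => (M.augment).label ((M.augment).stateAtI w i) with hσdef
    have hconj : LTL.SatI σ 0 (LTL.trans φ) ∧
        LTL.SatI σ 0 (LTL.untl (.atom none)
          (LTL.G (.neg (.atom none)))) := hsat
    obtain ⟨j, -, hG, hks⟩ := hconj.2
    have hdead : ∀ m, j ≤ m → (M.augment).stateAtI w m = none := by
      intro m hm
      by_contra hne
      apply hG
      refine ⟨m, hm, ?_, fun _ _ _ => trivial⟩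
      intro hnot
      apply hnot
      obtain ⟨s, hs⟩ := Option.ne_none_iff_exists'.mp hne
      show none ∈ σ m
      rw [hσdef]
      simp only [hs]
      exact Set.mem_insert _ _
    have halive : ∀ k, k < j → ∃ s, (M.augment).stateAtI w k = some s := by
      intro k hk
      have hmem : none ∈ σ k := hks k (Nat.zero_le _) hk
      cases hsk : (M.augment).stateAtI w k with
      | none => rw [hσdef] at hmem; simp only [hsk] at hmem; exact absurd hmem (by
          simp [MDP.augment])
      | some s => exact ⟨s, rfl⟩
    have hj0 : 0 < j := by
      rcases Nat.eq_zero_or_pos j with h0 | h0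
      · exfalso
        have := hdead 0 (by omega)
        have h00 : (M.augment).stateAtI w 0 = some M.init := rfl
        rw [h00] at this
        cases this
      · exact h0
    set n := j - 1 with hn
    have hjn : j = n + 1 := by omega
    have hsome : ∀ p ∈ takeI w n, ∃ a s, p = (some a, some s) := by
      intro p hp
      obtain ⟨i, hi, rfl⟩ := List.mem_map.mp hp
      rw [List.mem_range] at hi
      obtain ⟨s', hs'⟩ := halive (i + 1) (by omega)
      obtain ⟨s₀, hs₀⟩ := halive i (by omega)
      have hv := (hw.1 i).2
      cases ha : (w i).1 with
      | none =>
          exfalso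
          rw [hs₀, ha, hs'] at hv
          simp [MDP.augment] at hv
      | some a =>
          refine ⟨a, s', ?_⟩
          have hsnd : (w i).2 = some s' := hs'
          rw [← ha, ← hsnd]
    obtain ⟨l, hlift⟩ := exists_liftFin _ hsome
    have hlen : l.length = n := by
      have := congrArg List.length hlift
      rwa [length_liftFin, length_takeI] at this
    have hentry : ∀ i (hi : i < n), w i =
        (some (l[i]'(by omega)).1, some (l[i]'(by omega)).2) := by
      intro i hi
      have hgq := congrArg (fun L => L[i]?) hlift
      rw [List.getElem?_eq_getElem (show i < (liftFin l).length by
          rw [length_liftFin]; omega),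
        getElem_liftFin l i (by omega),
        List.getElem?_eq_getElem (show i < (takeI w n).length by
          rw [length_takeI]; exact hi),
        getElem_takeI w n i (by rw [length_takeI]; exact hi)] at hgq
      exact (Option.some.inj hgq).symm
    have hstate : ∀ i ≤ n, (M.augment).stateAtI w i = some (M.stateAtF l i) := by
      intro i hi
      rw [(M.augment).stateAtI_eq_stateAtF w hi (n := n), ← hlift,
        stateAtF_liftFin]
    have hwn1 : (M.augment).stateAtI w (n + 1) = none := hdead (n + 1) (by omega)
    have hactn : (w n).1 = none := by
      obtain ⟨s₀, hs₀⟩ := halive n (by omega)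
      have hv := (hw.1 n).2
      cases ha : (w n).1 with
      | none => rfl
      | some a =>
          exfalso
          rw [hs₀, ha, hwn1] at hv
          simp [MDP.augment] at hv
    have hmem : l ∈ Daug M π'' φ := by
      refine ⟨?_, ?_, ?_, ?_⟩
      · intro i hil
        have hi : i < n := by omega
        have h1 := hstate i hi.le
        have h2 := hstate (i + 1) (by omega)
        have h3 : M.stateAtF l (i + 1) = l[i].2 := M.stateAtF_succ l hil
        have hv := hw.1 i
        rw [h1, hentry i hi] at hv
        have hv2 := hv.2
        rw [h2, h3] at hv2
        simp only [List.get_eq_getElem]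
        refine ⟨?_, ?_⟩
        · have := hv.1
          simp only [MDP.augment, Set.mem_insert_iff, Set.mem_image] at this
          rcases this with h | ⟨a, ha, he⟩
          · cases h
          · have : a = l[i].1 := Option.some.inj he
            subst this
            exact ha
        · exact hv2
      · intro i hil
        have hi : i < n := by omega
        have h1 : takeI w i = liftFin (l.take i) := by
          rw [← take_takeI w hi.le, ← hlift, take_liftFin]
        have := hw.2 i
        rw [hentry i hi] at this
        rw [← h1]
        exact this ▸ rfl
      · rw [hlift, ← hw.2 n, hactn]
      · have hσeq := sigma_eq_liftTrace M (by rw [hlen]; exact hstate)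
          (fun m hm => hdead m (by omega))
        have h1 := hconj.1
        rw [hσdef] at h1
        rw [hσeq] at h1
        exact (liftTrace_sat_iff φ _ (by rw [M.length_traceF]; omega)).1 h1
    refine Set.mem_biUnion hmem ⟨hw, ?_⟩
    rw [length_deadPath, hlen]
    apply takeI_eq w (by rw [length_deadPath, hlen])
    intro i hi
    rcases Nat.lt_or_ge i n with h | h
    · rw [hentry i h, getElem_deadPath_lt l (by omega)]
    · have hin : i = n := by omega
      rw [getElem_deadPath_of_eq l (by omega), hin]
      have hsnd : (w n).2 = none := hwn1
      rw [← hactn, ← hsnd]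
  · intro hw
    simp only [Set.mem_iUnion] at hw
    obtain ⟨l, hl, hcyl⟩ := hw
    exact cyl_dead_subset M hπ'' φ hl hcyl

theorem daug_pairwiseDisjoint (M : MDP S A AP)
    (π'' : Policy (Option S) (Option A)) (φ : LTL AP) :
    (Daug M π'' φ).PairwiseDisjoint
      fun l => (M.augment).Cyl π'' (deadPath l) := by
  have key : ∀ l₁ l₂ : FinPath S A, l₁ ∈ Daug M π'' φ → l₂ ∈ Daug M π'' φ →
      l₁.length < l₂.length →
      ∀ w, w ∈ (M.augment).Cyl π'' (deadPath l₁) →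
        w ∉ (M.augment).Cyl π'' (deadPath l₂) := by
    intro l₁ l₂ _ _ hlt w hw₁ hw₂
    have e₁ : w l₁.length = (none, none) := by
      have := congrArg (fun L => L[l₁.length]?) hw₁.2
      rw [length_deadPath] at this
      simp only [takeI, List.getElem?_map, List.getElem?_range
        (show l₁.length < l₁.length + 1 by omega)] at this
      rw [List.getElem?_eq_getElem (by rw [length_deadPath]; omega),
        getElem_deadPath_last] at this
      exact Option.some.inj this
    have e₂ : w l₁.length = (some (l₂[l₁.length]'hlt).1,
        some (l₂[l₁.length]'hlt).2) := by
      have := congrArg (fun L => L[l₁.length]?) hw₂.2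
      rw [length_deadPath] at this
      simp only [takeI, List.getElem?_map, List.getElem?_range
        (show l₁.length < l₂.length + 1 by omega)] at this
      rw [List.getElem?_eq_getElem (by rw [length_deadPath]; omega),
        getElem_deadPath_lt l₂ hlt] at this
      exact Option.some.inj this
    rw [e₁] at e₂
    exact absurd (congrArg Prod.fst e₂) (by simp)
  intro l₁ h₁ l₂ h₂ hne
  rw [Function.onFun, Set.disjoint_left]
  intro w hw₁ hw₂
  rcases lt_trichotomy l₁.length l₂.length with h | h | h
  · exact key l₁ l₂ h₁ h₂ h w hw₁ hw₂
  · apply hne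
    apply liftFin_injective
    have e₁ := hw₁.2
    have e₂ := hw₂.2
    have t₁ : liftFin l₁ = (deadPath l₁).take l₁.length := by
      rw [take_deadPath l₁ le_rfl, List.take_length]
    have t₂ : liftFin l₂ = (deadPath l₂).take l₂.length := by
      rw [take_deadPath l₂ le_rfl, List.take_length]
    rw [t₁, t₂, ← e₁, ← e₂, length_deadPath, length_deadPath, h]
  · exact key l₂ l₁ h₂ h₁ h w hw₂ hw₁

end Decomp

section LiftPolicy

variable {S A AP : Type}

/-- The policy of the augmented MDP that mimics `π₂` and plays `a_term` as
soon as the trace so far satisfies `φ`. -/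
noncomputable def liftPolicy (M : MDP S A AP) (π₂ : Policy S A) (φ : LTL AP) :
    Policy (Option S) (Option A) := fun l' =>
  if h : ∃ l : FinPath S A, liftFin l = l' then
    (if LTL.SatF (M.traceF h.choose) φ then none else some (π₂ h.choose))
  else none

theorem liftPolicy_lift (M : MDP S A AP) (π₂ : Policy S A) (φ : LTL AP)
    (l : FinPath S A) : liftPolicy M π₂ φ (liftFin l) =
      if LTL.SatF (M.traceF l) φ then none else some (π₂ l) := by
  have h : ∃ l₀ : FinPath S A, liftFin l₀ = liftFin l := ⟨l, rfl⟩
  have hch : h.choose = l := liftFin_injective h.choose_spec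
  show dite _ _ _ = _
  rw [dif_pos h, hch]

theorem liftPolicy_isPolicy (M : MDP S A AP) {π₂ : Policy S A}
    (hπ₂ : M.IsPolicy π₂) (φ : LTL AP) :
    (M.augment).IsPolicy (liftPolicy M π₂ φ) := by
  intro l'
  by_cases h : ∃ l : FinPath S A, liftFin l = l'
  · obtain ⟨l, rfl⟩ := h
    rw [liftPolicy_lift, lastState_liftFin]
    by_cases hs : LTL.SatF (M.traceF l) φ
    · rw [if_pos hs]
      exact none_mem_enabled_augment M _
    · rw [if_neg hs]
      show some (π₂ l) ∈ insert none (Option.some '' M.enabled (M.lastState l))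
      exact Set.mem_insert_iff.mpr (Or.inr ⟨_, hπ₂ l, rfl⟩)
  · show dite _ _ _ ∈ _
    rw [dif_neg h]
    exact none_mem_enabled_augment M _

theorem daug_liftPolicy (M : MDP S A AP) (π₂ : Policy S A) (φ : LTL AP) :
    Daug M (liftPolicy M π₂ φ) φ = Dphi M π₂ φ := by
  ext l
  constructor
  · rintro ⟨hv, hcons, hdead, hsat⟩
    refine ⟨hv, ?_, hsat, ?_⟩
    · intro i h
      have hc := hcons i h
      rw [liftPolicy_lift] at hc
      by_cases hs : LTL.SatF (M.traceF (l.take i)) φ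
      · rw [if_pos hs] at hc; cases hc
      · rw [if_neg hs] at hc; exact Option.some.inj hc
    · intro m hm
      have hc := hcons m hm
      rw [liftPolicy_lift] at hc
      by_cases hs : LTL.SatF (M.traceF (l.take m)) φ
      · rw [if_pos hs] at hc; cases hc
      · exact hs
  · rintro ⟨hv, hcons, hsat, hmin⟩
    refine ⟨hv, ?_, ?_, hsat⟩
    · intro i h
      rw [liftPolicy_lift, if_neg (hmin i h), hcons i h]
    · rw [liftPolicy_lift, if_pos hsat]

theorem daug_consistent (M : MDP S A AP)
    {π' : Policy (Option S) (Option A)} {π : Policy S A} {φ : LTL AP}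
    (hrepl : ∀ (l : FinPath S A) (a : A), π' (liftFin l) = some a → π l = a)
    {l : FinPath S A} (hl : l ∈ Daug M π' φ) : ConsistentFin π l :=
  fun i h => (hrepl (l.take i) _ (hl.2.1 i h).symm).symm

theorem daug_cyl_M_disjoint (M : MDP S A AP)
    (π' : Policy (Option S) (Option A)) (π : Policy S A) (φ : LTL AP) :
    (Daug M π' φ).PairwiseDisjoint fun l => M.Cyl π l := by
  have key : ∀ l₁ l₂ : FinPath S A, l₁ ∈ Daug M π' φ → l₂ ∈ Daug M π' φ →
      l₁.length < l₂.length → ∀ w, w ∈ M.Cyl π l₁ → w ∉ M.Cyl π l₂ := by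
    intro l₁ l₂ h₁ h₂ hlt w hw₁ hw₂
    have ht : l₁ = l₂.take l₁.length := mem_cyl_take_eq M π hw₁ hw₂ hlt.le
    have hc := h₂.2.1 l₁.length hlt
    rw [← ht, h₁.2.2.1] at hc
    cases hc
  intro l₁ h₁ l₂ h₂ hne
  rw [Function.onFun, Set.disjoint_left]
  intro w hw₁ hw₂
  rcases lt_trichotomy l₁.length l₂.length with h | h | h
  · exact key l₁ l₂ h₁ h₂ h w hw₁ hw₂
  · apply hne
    have ht : l₁ = l₂.take l₁.length := mem_cyl_take_eq M π hw₁ hw₂ h.le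
    rwa [h, List.take_length] at ht
  · exact key l₂ l₁ h₂ h₁ h w hw₂ hw₁

end LiftPolicy

end Aux

/-- Corollary 1: if `π'*` maximizes `Pr(M'^{π'} ⊨ g(φ))` over
all policies of the augmented MDP `M'`, then any policy `π` of `M` obtained
from `π'*` by replacing every choice of `a_term` with an arbitrary enabled
action of `M` maximizes `Pr(M^π ⊨ φ)` over all policies of `M`. -/
theorem optimal_augment_policy_projects_to_optimal
    {S A AP : Type} [Fintype S] [Fintype A] [Fintype AP]
    (M : MDP S A AP) (hM : M.IsWF) (φ : LTL AP)
    (μf : ∀ π : Policy S A,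
      @MeasureTheory.Measure (InfPath S A) (M.cylSigma π))
    (hμf : ∀ π : Policy S A, M.IsPolicy π → IsCylMeasure M π (μf π))
    (μf' : ∀ π' : Policy (Option S) (Option A),
      @MeasureTheory.Measure (InfPath (Option S) (Option A))
        ((M.augment).cylSigma π'))
    (hμf' : ∀ π' : Policy (Option S) (Option A),
      (M.augment).IsPolicy π' → IsCylMeasure (M.augment) π' (μf' π'))
    (π' : Policy (Option S) (Option A)) (hπ' : (M.augment).IsPolicy π')
    (hopt : ∀ π'' : Policy (Option S) (Option A), (M.augment).IsPolicy π'' →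
      μf' π'' ((M.augment).SatLTLSet π'' (LTL.gtrans φ)) ≤
        μf' π' ((M.augment).SatLTLSet π' (LTL.gtrans φ)))
    (π : Policy S A) (hπ : M.IsPolicy π)
    (hrepl : ∀ (l : FinPath S A) (a : A), π' (liftFin l) = some a → π l = a) :
    μf π (M.SatPhiSet π φ) =
      ⨆ (π₂ : Policy S A) (_ : M.IsPolicy π₂), μf π₂ (M.SatPhiSet π₂ φ) := by
  classical
  have key_M : ∀ (π₂ : Policy S A), M.IsPolicy π₂ →
      ∀ (D : Set (FinPath S A)), (∀ l ∈ D, M.ValidFin l) →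
        (∀ l ∈ D, ConsistentFin π₂ l) →
        (D.PairwiseDisjoint fun l => M.Cyl π₂ l) →
        μf π₂ (⋃ l ∈ D, M.Cyl π₂ l) = ∑' l : D, M.pathWeight l.1 := by
    intro π₂ h D hv hc hd
    exact measure_biUnion_cyl M π₂ (μf π₂) (hμf π₂ h) D (fun l => l) hv hc hd
  have key_M' : ∀ (π'' : Policy (Option S) (Option A)), (M.augment).IsPolicy π'' →
      μf' π'' ((M.augment).SatLTLSet π'' (LTL.gtrans φ)) =
        ∑' l : Daug M π'' φ, M.pathWeight l.1 := by
    intro π'' h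
    rw [satLTLSet_augment_eq M h φ]
    rw [measure_biUnion_cyl (M.augment) π'' (μf' π'') (hμf' π'' h)
      (Daug M π'' φ) deadPath (fun l hl => validFin_deadPath M hl.1)
      (fun l hl => consistentFin_deadPath M hl)
      (daug_pairwiseDisjoint M π'' φ)]
    exact tsum_congr fun l => pathWeight_deadPath M l.1
  have step_b : μf' π' ((M.augment).SatLTLSet π' (LTL.gtrans φ)) ≤
      μf π (M.SatPhiSet π φ) := by
    rw [key_M' π' hπ']
    rw [← key_M π hπ (Daug M π' φ) (fun l hl => hl.1)
      (fun l hl => daug_consistent M hrepl hl)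
      (daug_cyl_M_disjoint M π' π φ)]
    apply MeasureTheory.measure_mono
    exact Set.iUnion₂_subset fun l hl => cyl_subset_satPhiSet M π φ hl.2.2.2
  have step_a : ∀ π₂ : Policy S A, M.IsPolicy π₂ →
      μf π₂ (M.SatPhiSet π₂ φ) ≤
        μf' π' ((M.augment).SatLTLSet π' (LTL.gtrans φ)) := by
    intro π₂ h
    have h1 : μf π₂ (M.SatPhiSet π₂ φ) = ∑' l : Dphi M π₂ φ, M.pathWeight l.1 := by
      rw [satPhiSet_eq]
      exact key_M π₂ h (Dphi M π₂ φ) (fun l hl => hl.1) (fun l hl => hl.2.1)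
        (dphi_pairwiseDisjoint M π₂ φ)
    have h2 := key_M' (liftPolicy M π₂ φ) (liftPolicy_isPolicy M h φ)
    rw [daug_liftPolicy] at h2
    rw [h1, ← h2]
    exact hopt _ (liftPolicy_isPolicy M h φ)
  apply le_antisymm
  · exact le_iSup₂ (f := fun (π₂ : Policy S A) (_ : M.IsPolicy π₂) =>
      μf π₂ (M.SatPhiSet π₂ φ)) π hπ
  · exact iSup₂_le fun π₂ h₂ => (step_a π₂ h₂).trans step_b

end LTLfMDP
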